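/- For a partition λ of n with first part λ₁, every quasi-Yamanouchi tableau of shape λ in QYT_{≤n}(λ) equals its own destandardization, and the sets QYT_{=m}(λ) for ℓ(λ) ≤ m ≤ n−(λ₁−1) partition QYT_{≤n}(λ); consequently SYT(λ) = Σ_{m=ℓ(λ)}^{n−(λ₁−1)} QYT_{=m}(λ). -/

import Mathlib

open YoungDiagram

/-- Entries of `T` are all `< m`.  Entries are 0-based: the value `v` represents the
positive integer `v + 1`, so this says all (1-based) entries are at most `m`. -/
def EntryLE (μ : YoungDiagram) (T : SemistandardYoungTableau μ) (m : ℕ) : Prop :=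
  ∀ i j : ℕ, (i, j) ∈ μ → T i j < m

/-- `T` is quasi-Yamanouchi: whenever a value `v > 0` appears, the leftmost
occurrence of `v` is weakly left of some occurrence of `v - 1`; equivalently some
occurrence of `v` is weakly left of some occurrence of `v - 1`. -/
def IsQY (μ : YoungDiagram) (T : SemistandardYoungTableau μ) : Prop :=
  ∀ v : ℕ, 0 < v → (∃ i j : ℕ, (i, j) ∈ μ ∧ T i j = v) →
    ∃ i j i' j' : ℕ, (i, j) ∈ μ ∧ (i', j') ∈ μ ∧ T i j = v ∧ T i' j' = v - 1 ∧ j ≤ j'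

/-- The maximum (1-based) entry of `T` is exactly `m`: all entries are `< m`
(0-based) and the value `m - 1` appears. -/
def MaxEq (μ : YoungDiagram) (T : SemistandardYoungTableau μ) (m : ℕ) : Prop :=
  EntryLE μ T m ∧ ∃ i j : ℕ, (i, j) ∈ μ ∧ T i j = m - 1

/-- The number of quasi-Yamanouchi tableaux of shape `μ` with maximum entry exactly `m`. -/
noncomputable def QYTeq (μ : YoungDiagram) (m : ℕ) : ℕ :=
  Nat.card {T : SemistandardYoungTableau μ // IsQY μ T ∧ MaxEq μ T m}

/-- The number of semistandard Young tableaux of shape `μ` with entries at most `m`. -/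
noncomputable def SSYTle (μ : YoungDiagram) (m : ℕ) : ℕ :=
  Nat.card {T : SemistandardYoungTableau μ // EntryLE μ T m}

/-- `T` is a standard Young tableau: each of the values `0, …, μ.card - 1`
(representing `1, …, n`) appears exactly once. -/
def IsSYT (μ : YoungDiagram) (T : SemistandardYoungTableau μ) : Prop :=
  ∀ v : ℕ, v < μ.card → ∃! p : ℕ × ℕ, p ∈ μ ∧ T p.1 p.2 = v

/-- The number of standard Young tableaux of shape `μ`. -/
noncomputable def SYTcount (μ : YoungDiagram) : ℕ :=
  Nat.card {T : SemistandardYoungTableau μ // IsSYT μ T}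

/-- The descent set of a standard tableau, in the paper's 1-based labelling:
`d ∈ Des T` iff `1 ≤ d ≤ n - 1` and the (1-based) entry `d + 1` (0-based value `d`)
appears weakly left of the (1-based) entry `d` (0-based value `d - 1`). -/
def Des (μ : YoungDiagram) (T : SemistandardYoungTableau μ) : Set ℕ :=
  {d | 1 ≤ d ∧ d ≤ μ.card - 1 ∧
    ∃ i j i' j' : ℕ, (i, j) ∈ μ ∧ (i', j') ∈ μ ∧ T i j = d ∧ T i' j' = d - 1 ∧ j ≤ j'}

/-- One destandardization step at value `v`: every occurrence of `v` lies strictly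
right of every occurrence of `v - 1` (in particular vacuously if no `v - 1` appears),
and `T'` is obtained from `T` by decrementing every entry equal to `v` to `v - 1`. -/
def StepAt (μ : YoungDiagram) (T T' : SemistandardYoungTableau μ) (v : ℕ) : Prop :=
  0 < v ∧ (∃ i j : ℕ, (i, j) ∈ μ ∧ T i j = v) ∧
    (∀ i j i' j' : ℕ, (i, j) ∈ μ → (i', j') ∈ μ → T i j = v → T i' j' = v - 1 → j' < j) ∧
    (∀ i j : ℕ, (i, j) ∈ μ → T' i j = if T i j = v then v - 1 else T i j)

/-- One destandardization step (at some value). -/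
def Step (μ : YoungDiagram) (T T' : SemistandardYoungTableau μ) : Prop :=
  ∃ v : ℕ, StepAt μ T T' v

/-- `Q` is the destandardization of `T`: it is reachable from `T` by destandardization
steps and no further step applies to it. -/
def IsDst (μ : YoungDiagram) (T Q : SemistandardYoungTableau μ) : Prop :=
  Relation.ReflTransGen (Step μ) T Q ∧ ∀ Q' : SemistandardYoungTableau μ, ¬ Step μ Q Q'

/-- The hook length of the box in row `i`, column `j` of `μ`. -/
def hookLength (μ : YoungDiagram) (i j : ℕ) : ℕ :=
  (μ.rowLen i - j) + (μ.colLen j - i) - 1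

/-- The hook-content product `∏_{u ∈ μ} (k + c(u)) / h(u)` where `c(u)` is the
content (column minus row) and `h(u)` the hook length. -/
noncomputable def hookContent (μ : YoungDiagram) (k : ℕ) : ℚ :=
  ∏ c ∈ μ.cells, ((k : ℚ) + (c.2 : ℚ) - (c.1 : ℚ)) / (hookLength μ c.1 c.2 : ℚ)

/-- `μ` is the partition `(l1, l2, 2^{h2-2}, 1^{h1-h2})`: first row `l1`, second row
`l2`, rows `2, …, h2 - 1` of length `2`, rows `h2, …, h1 - 1` of length `1`, and no
other rows; so the first column has height `h1` and the second column height `h2`. -/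
def HasRows2 (μ : YoungDiagram) (l1 l2 h1 h2 : ℕ) : Prop :=
  μ.rowLen 0 = l1 ∧ μ.rowLen 1 = l2 ∧
    (∀ i : ℕ, 2 ≤ i → i < h2 → μ.rowLen i = 2) ∧
    (∀ i : ℕ, h2 ≤ i → i < h1 → μ.rowLen i = 1) ∧
    (∀ i : ℕ, h1 ≤ i → μ.rowLen i = 0)


namespace QYTAux

variable {μ : YoungDiagram}

/-- The lexicographic key (value, column) of a cell. -/
def key (Q : SemistandardYoungTableau μ) (p : ℕ × ℕ) : ℕ ×ₗ ℕ := toLex (Q p.1 p.2, p.2)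

lemma key_injOn (Q : SemistandardYoungTableau μ) {p q : ℕ × ℕ} (hp : p ∈ μ) (hq : q ∈ μ)
    (h : key Q p = key Q q) : p = q := by
  have h1 : Q p.1 p.2 = Q q.1 q.2 := congrArg (fun x => (ofLex x).1) h
  have h2 : p.2 = q.2 := congrArg (fun x => (ofLex x).2) h
  rcases lt_trichotomy p.1 q.1 with hlt | heq | hgt
  · have := Q.col_strict hlt (h2 ▸ hq : (q.1, p.2) ∈ μ)
    rw [← h2] at h1; omega
  · exact Prod.ext heq h2
  · have := Q.col_strict hgt (h2 ▸ hp : (p.1, q.2) ∈ μ)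
    rw [h2] at h1; omega

/-- The rank of a cell: number of cells with strictly smaller key. -/
def rank (Q : SemistandardYoungTableau μ) (p : ℕ × ℕ) : ℕ :=
  (μ.cells.filter (fun q => key Q q < key Q p)).card

lemma rank_lt_card (Q : SemistandardYoungTableau μ) {p : ℕ × ℕ} (hp : p ∈ μ.cells) :
    rank Q p < μ.card := by
  apply Finset.card_lt_card
  refine ⟨Finset.filter_subset _ _, fun hsub => ?_⟩
  have := hsub hp
  simp at this

lemma rank_lt_rank (Q : SemistandardYoungTableau μ) {p q : ℕ × ℕ} (hp : p ∈ μ.cells)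
    (h : key Q p < key Q q) : rank Q p < rank Q q := by
  apply Finset.card_lt_card
  constructor
  · intro x hx
    simp only [Finset.mem_filter] at hx ⊢
    exact ⟨hx.1, hx.2.trans h⟩
  · intro hsub
    have := hsub (by simp [Finset.mem_filter, hp, h] : p ∈ μ.cells.filter (fun q' => key Q q' < key Q q))
    simp at this

lemma rank_le_rank_iff (Q : SemistandardYoungTableau μ) {p q : ℕ × ℕ} (hp : p ∈ μ.cells)
    (hq : q ∈ μ.cells) : rank Q p ≤ rank Q q ↔ key Q p ≤ key Q q := by
  constructor
  · intro h
    by_contra hk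
    push_neg at hk
    exact absurd (rank_lt_rank Q hq hk) (by omega)
  · intro h
    rcases eq_or_lt_of_le h with heq | hlt
    · rw [key_injOn Q ((YoungDiagram.mem_cells _).1 hp) ((YoungDiagram.mem_cells _).1 hq) heq]
    · exact (rank_lt_rank Q hp hlt).le

lemma rank_lt_rank_iff (Q : SemistandardYoungTableau μ) {p q : ℕ × ℕ} (hp : p ∈ μ.cells)
    (hq : q ∈ μ.cells) : rank Q p < rank Q q ↔ key Q p < key Q q := by
  rw [← not_le, ← not_le, not_iff_not, rank_le_rank_iff Q hq hp]

lemma rank_injOn (Q : SemistandardYoungTableau μ) {p q : ℕ × ℕ} (hp : p ∈ μ.cells)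
    (hq : q ∈ μ.cells) (h : rank Q p = rank Q q) : p = q := by
  apply key_injOn Q ((YoungDiagram.mem_cells _).1 hp) ((YoungDiagram.mem_cells _).1 hq)
  exact le_antisymm ((rank_le_rank_iff Q hp hq).1 h.le) ((rank_le_rank_iff Q hq hp).1 h.ge)

lemma rank_surj (Q : SemistandardYoungTableau μ) {v : ℕ} (hv : v < μ.card) :
    ∃ p ∈ μ.cells, rank Q p = v := by
  classical
  let F : {p // p ∈ μ.cells} → Fin μ.card := fun p => ⟨rank Q p.1, rank_lt_card Q p.2⟩
  have hinj : Function.Injective F := by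
    intro a b hab
    exact Subtype.ext (rank_injOn Q a.2 b.2 (congrArg Fin.val hab))
  have hbij : Function.Bijective F := by
    rw [Fintype.bijective_iff_injective_and_card]
    exact ⟨hinj, by simp⟩
  obtain ⟨p, hp⟩ := hbij.2 ⟨v, hv⟩
  exact ⟨p.1, p.2, congrArg Fin.val hp⟩


/-- Standardization of a tableau: replace each entry by its rank in the
(value, column) lexicographic order. -/
def stdT (Q : SemistandardYoungTableau μ) : SemistandardYoungTableau μ where
  entry i j := if (i, j) ∈ μ then rank Q (i, j) else 0
  row_weak' := by
    intro i j1 j2 hj hcell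
    have h1 : (i, j1) ∈ μ := μ.up_left_mem le_rfl hj.le hcell
    show (if (i, j1) ∈ μ then rank Q (i, j1) else 0) ≤ (if (i, j2) ∈ μ then rank Q (i, j2) else 0)
    rw [if_pos h1, if_pos hcell]
    have hle := Q.row_weak hj hcell
    have hkey : key Q (i, j1) < key Q (i, j2) := by
      rw [key, key, Prod.Lex.lt_iff]
      rcases lt_or_eq_of_le hle with h | h
      · exact Or.inl h
      · exact Or.inr ⟨h, hj⟩
    exact (rank_lt_rank Q ((YoungDiagram.mem_cells _).2 h1) hkey).le
  col_strict' := by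
    intro i1 i2 j hi hcell
    have h1 : (i1, j) ∈ μ := μ.up_left_mem hi.le le_rfl hcell
    show (if (i1, j) ∈ μ then rank Q (i1, j) else 0) < (if (i2, j) ∈ μ then rank Q (i2, j) else 0)
    rw [if_pos h1, if_pos hcell]
    have hlt := Q.col_strict hi hcell
    have hkey : key Q (i1, j) < key Q (i2, j) := by
      rw [key, key, Prod.Lex.lt_iff]
      exact Or.inl hlt
    exact rank_lt_rank Q ((YoungDiagram.mem_cells _).2 h1) hkey
  zeros' := by
    intro i j h
    show (if (i, j) ∈ μ then rank Q (i, j) else 0) = 0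
    rw [if_neg h]

lemma stdT_apply (Q : SemistandardYoungTableau μ) {i j : ℕ} (hp : (i, j) ∈ μ) :
    stdT Q i j = rank Q (i, j) := if_pos hp

lemma stdT_isSYT (Q : SemistandardYoungTableau μ) : IsSYT μ (stdT Q) := by
  intro v hv
  obtain ⟨p, hp, hr⟩ := rank_surj Q hv
  have hpμ : p ∈ μ := (YoungDiagram.mem_cells _).1 hp
  refine ⟨p, ⟨hpμ, by rw [show stdT Q p.1 p.2 = rank Q (p.1, p.2) from if_pos hpμ]; simpa using hr⟩, ?_⟩
  rintro q ⟨hqμ, hq⟩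
  rw [show stdT Q q.1 q.2 = rank Q (q.1, q.2) from if_pos hqμ] at hq
  exact rank_injOn Q ((YoungDiagram.mem_cells _).2 hqμ) hp (by simpa using hq.trans hr.symm)

/-- The value `v` appears in `Q`. -/
def appears (Q : SemistandardYoungTableau μ) (v : ℕ) : Prop :=
  ∃ i j : ℕ, (i, j) ∈ μ ∧ Q i j = v

lemma appears_pred {Q : SemistandardYoungTableau μ} (hQ : IsQY μ Q) {v : ℕ} (hv : 0 < v)
    (h : appears Q v) : appears Q (v - 1) := by
  obtain ⟨i, j, i', j', _, hij', _, hval', _⟩ := hQ v hv h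
  exact ⟨i', j', hij', hval'⟩

lemma appears_of_le {Q : SemistandardYoungTableau μ} (hQ : IsQY μ Q) {v w : ℕ} (hvw : v ≤ w)
    (hw : appears Q w) : appears Q v := by
  induction w with
  | zero => simpa [Nat.le_zero.1 hvw] using hw
  | succ w ih =>
    rcases Nat.lt_or_ge v (w + 1) with h | h
    · exact ih (by omega) (by simpa using appears_pred hQ (Nat.succ_pos w) hw)
    · have : v = w + 1 := by omega
      rwa [this]

lemma row_le_entry (Q : SemistandardYoungTableau μ) {i j : ℕ} (hp : (i, j) ∈ μ) :
    i ≤ Q i j := by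
  induction i with
  | zero => exact Nat.zero_le _
  | succ i ih =>
    have h1 : (i, j) ∈ μ := μ.up_left_mem (Nat.le_succ i) le_rfl hp
    exact Nat.lt_of_le_of_lt (ih h1) (Q.col_strict (Nat.lt_succ_self i) hp)

/-- One more than the largest entry of `Q`. -/
def mval (Q : SemistandardYoungTableau μ) : ℕ := (μ.cells.sup fun p => Q p.1 p.2) + 1

lemma entry_le_sup (Q : SemistandardYoungTableau μ) {i j : ℕ} (hp : (i, j) ∈ μ) :
    Q i j ≤ μ.cells.sup fun p => Q p.1 p.2 :=
  Finset.le_sup (f := fun p : ℕ × ℕ => Q p.1 p.2) ((YoungDiagram.mem_cells _).2 hp)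

lemma maxEq_mval (Q : SemistandardYoungTableau μ) (hμ : 0 < μ.card) : MaxEq μ Q (mval Q) := by
  constructor
  · intro i j hp
    exact Nat.lt_succ_of_le (entry_le_sup Q hp)
  · obtain ⟨p, hp, hsup⟩ := Finset.exists_mem_eq_sup μ.cells
      (Finset.card_pos.1 hμ) (fun p : ℕ × ℕ => Q p.1 p.2)
    exact ⟨p.1, p.2, (YoungDiagram.mem_cells _).1 hp, by simp [mval, ← hsup]⟩

lemma maxEq_unique {Q : SemistandardYoungTableau μ} {m : ℕ} (hμ : 0 < μ.card)
    (h : MaxEq μ Q m) : m = mval Q := by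
  obtain ⟨hle, i, j, hij, hval⟩ := h
  have h1 : 0 < m := Nat.pos_of_ne_zero (by intro h; rw [h] at hle; exact Nat.not_lt_zero _ (hle i j hij))
  have h2 : m - 1 ≤ μ.cells.sup fun p => Q p.1 p.2 := hval ▸ entry_le_sup Q hij
  obtain ⟨p, hp, hsup⟩ := Finset.exists_mem_eq_sup μ.cells
    (Finset.card_pos.1 hμ) (fun p : ℕ × ℕ => Q p.1 p.2)
  have h3 : (μ.cells.sup fun p : ℕ × ℕ => Q p.1 p.2) < m := by
    rw [hsup]; exact hle p.1 p.2 ((YoungDiagram.mem_cells _).1 hp)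
  rw [mval]; omega

lemma exists_left_occ {Q : SemistandardYoungTableau μ} (hQ : IsQY μ Q) {j : ℕ}
    (hj : (0, j) ∈ μ) (hjpos : 0 < j) :
    ∃ a b : ℕ, (a, b) ∈ μ ∧ Q a b = Q 0 j ∧ b < j := by
  by_cases hv : Q 0 j = 0
  · have h00 : ((0 : ℕ), (0 : ℕ)) ∈ μ := μ.up_left_mem le_rfl (Nat.zero_le _) hj
    have : Q 0 0 ≤ Q 0 j := Q.row_weak hjpos hj
    exact ⟨0, 0, h00, by omega, hjpos⟩
  · obtain ⟨a, b, a', b', hab, hab', hvab, hvab', hbb'⟩ :=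
      hQ (Q 0 j) (Nat.pos_of_ne_zero hv) ⟨0, j, hj, rfl⟩
    have h0b' : ((0 : ℕ), b') ∈ μ := μ.up_left_mem (Nat.zero_le _) le_rfl hab'
    have h1 : Q 0 b' ≤ Q a' b' := Q.col_weak (Nat.zero_le _) hab'
    have hb'j : b' < j := by
      by_contra hle
      push_neg at hle
      have := Q.row_weak_of_le hle h0b'
      omega
    exact ⟨a, b, hab, hvab, by omega⟩

lemma mval_add_le {Q : SemistandardYoungTableau μ} (hQ : IsQY μ Q) (hμ : 0 < μ.card) :
    mval Q + (μ.rowLen 0 - 1) ≤ μ.card := by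
  classical
  set occ : ℕ → Finset (ℕ × ℕ) := fun v => μ.cells.filter (fun p => Q p.1 p.2 = v) with hocc_def
  have hocc : ∀ v < mval Q, (occ v).Nonempty := by
    intro v hv
    obtain ⟨p, hp, hsup⟩ := Finset.exists_mem_eq_sup μ.cells
      (Finset.card_pos.1 hμ) (fun p : ℕ × ℕ => Q p.1 p.2)
    have happ : appears Q v := by
      refine appears_of_le hQ ?_ ⟨p.1, p.2, (YoungDiagram.mem_cells _).1 hp, rfl⟩
      rw [mval] at hv; omega
    obtain ⟨i, j, hij, hval⟩ := happ
    exact ⟨(i, j), Finset.mem_filter.2 ⟨(YoungDiagram.mem_cells _).2 hij, hval⟩⟩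
  set f : ℕ → ℕ × ℕ := fun v =>
    if h : (occ v).Nonempty then (Finset.exists_min_image (occ v) Prod.snd h).choose
    else (0, 0) with hf_def
  have hf : ∀ v < mval Q, f v ∈ occ v ∧ ∀ q ∈ occ v, (f v).2 ≤ q.2 := by
    intro v hv
    have h := hocc v hv
    obtain ⟨hmem, hmin⟩ := (Finset.exists_min_image (occ v) Prod.snd h).choose_spec
    simp only [hf_def, dif_pos h]
    exact ⟨hmem, hmin⟩
  set S1 : Finset (ℕ × ℕ) := (Finset.range (mval Q)).image f with hS1
  set S2 : Finset (ℕ × ℕ) := (Finset.Ioo 0 (μ.rowLen 0)).image (fun j => ((0 : ℕ), j)) with hS2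
  have hval_f : ∀ v < mval Q, Q (f v).1 (f v).2 = v := by
    intro v hv
    have := (hf v hv).1
    rw [hocc_def] at this
    exact (Finset.mem_filter.1 this).2
  have hcard1 : S1.card = mval Q := by
    rw [hS1, Finset.card_image_of_injOn, Finset.card_range]
    intro a ha b hb hab
    rw [Finset.mem_coe, Finset.mem_range] at ha hb
    rw [← hval_f a ha, ← hval_f b hb, hab]
  have hcard2 : S2.card = μ.rowLen 0 - 1 := by
    rw [hS2, Finset.card_image_of_injective _ (fun a b hab => (Prod.ext_iff.1 hab).2),
      Nat.card_Ioo]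
    omega
  have hdisj : Disjoint S1 S2 := by
    rw [Finset.disjoint_left]
    rintro p hp1 hp2
    rw [hS1, Finset.mem_image] at hp1
    rw [hS2, Finset.mem_image] at hp2
    obtain ⟨v, hv, hfv⟩ := hp1
    obtain ⟨j, hj, hpj⟩ := hp2
    rw [Finset.mem_range] at hv
    rw [Finset.mem_Ioo] at hj
    have h0j : ((0 : ℕ), j) ∈ μ := by
      rw [YoungDiagram.mem_iff_lt_rowLen]; exact hj.2
    have hQ0j : Q 0 j = v := by
      have := hval_f v hv
      rw [hfv, ← hpj] at this
      simpa using this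
    obtain ⟨a, b, hab, hvab, hbj⟩ := exists_left_occ hQ h0j hj.1
    have habocc : (a, b) ∈ occ v := by
      rw [hocc_def]
      exact Finset.mem_filter.2 ⟨(YoungDiagram.mem_cells _).2 hab, by rw [hvab, hQ0j]⟩
    have := (hf v hv).2 (a, b) habocc
    rw [hfv, ← hpj] at this
    simp at this
    omega
  have hsub : S1 ∪ S2 ⊆ μ.cells := by
    intro p hp
    rcases Finset.mem_union.1 hp with hp | hp
    · rw [hS1, Finset.mem_image] at hp
      obtain ⟨v, hv, hfv⟩ := hp
      rw [Finset.mem_range] at hv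
      have := (hf v hv).1
      rw [hocc_def] at this
      exact hfv ▸ (Finset.mem_filter.1 this).1
    · rw [hS2, Finset.mem_image] at hp
      obtain ⟨j, hj, hpj⟩ := hp
      rw [Finset.mem_Ioo] at hj
      rw [← hpj, YoungDiagram.mem_cells, YoungDiagram.mem_iff_lt_rowLen]
      exact hj.2
  calc mval Q + (μ.rowLen 0 - 1) = (S1 ∪ S2).card := by
        rw [Finset.card_union_of_disjoint hdisj, hcard1, hcard2]
    _ ≤ μ.card := Finset.card_le_card hsub

lemma mval_mem_Icc {Q : SemistandardYoungTableau μ} (hQ : IsQY μ Q) (hμ : 0 < μ.card) :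
    mval Q ∈ Finset.Icc (μ.colLen 0) (μ.card - (μ.rowLen 0 - 1)) := by
  rw [Finset.mem_Icc]
  constructor
  · set h := μ.colLen 0 with hh
    have hpos : 0 < h := by
      obtain ⟨p, hp⟩ := Finset.card_pos.1 hμ
      have : ((0 : ℕ), (0 : ℕ)) ∈ μ :=
        μ.up_left_mem (Nat.zero_le _) (Nat.zero_le _) ((YoungDiagram.mem_cells _).1 hp)
      rw [hh, ← YoungDiagram.mem_iff_lt_colLen]
      exact this
    have hcell : (h - 1, (0 : ℕ)) ∈ μ := by
      rw [YoungDiagram.mem_iff_lt_colLen]; omega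
    have := (row_le_entry Q hcell).trans (entry_le_sup Q hcell)
    rw [mval]; omega
  · have := mval_add_le hQ hμ
    omega


lemma key_lt_iff (Q : SemistandardYoungTableau μ) (p q : ℕ × ℕ) :
    key Q p < key Q q ↔ Q p.1 p.2 < Q q.1 q.2 ∨ (Q p.1 p.2 = Q q.1 q.2 ∧ p.2 < q.2) :=
  Prod.Lex.lt_iff

lemma key_le_iff (Q : SemistandardYoungTableau μ) (p q : ℕ × ℕ) :
    key Q p ≤ key Q q ↔ Q p.1 p.2 < Q q.1 q.2 ∨ (Q p.1 p.2 = Q q.1 q.2 ∧ p.2 ≤ q.2) :=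
  Prod.Lex.le_iff

/-- `d` is a descent of `T` (0-based values `d` and `d-1`). -/
def isDes (T : SemistandardYoungTableau μ) (d : ℕ) : Prop :=
  ∃ p ∈ μ.cells, ∃ q ∈ μ.cells, T p.1 p.2 = d ∧ T q.1 q.2 = d - 1 ∧ p.2 ≤ q.2

open Classical in
/-- Number of descents of `T` that are `≤ v`. -/
noncomputable def desCount (T : SemistandardYoungTableau μ) (v : ℕ) : ℕ :=
  ((Finset.Icc 1 v).filter (isDes T)).card

lemma desCount_zero (T : SemistandardYoungTableau μ) : desCount T 0 = 0 := by
  rw [desCount]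
  simp

open Classical in
lemma desCount_succ (T : SemistandardYoungTableau μ) (v : ℕ) :
    desCount T (v + 1) = desCount T v + if isDes T (v + 1) then 1 else 0 := by
  rw [desCount, desCount]
  have h : Finset.Icc 1 (v + 1) = insert (v + 1) (Finset.Icc 1 v) := by
    ext x
    simp only [Finset.mem_Icc, Finset.mem_insert]
    omega
  rw [h, Finset.filter_insert]
  by_cases hd : isDes T (v + 1)
  · rw [if_pos hd, if_pos hd, Finset.card_insert_of_notMem (by simp [Finset.mem_filter])]
  · rw [if_neg hd, if_neg hd]
    omega

lemma desCount_mono (T : SemistandardYoungTableau μ) {v w : ℕ} (h : v ≤ w) :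
    desCount T v ≤ desCount T w := by
  classical
  exact Finset.card_le_card (Finset.filter_subset_filter _ (Finset.Icc_subset_Icc le_rfl h))

lemma desCount_le (T : SemistandardYoungTableau μ) (v : ℕ) : desCount T v ≤ v := by
  classical
  calc desCount T v ≤ (Finset.Icc 1 v).card := Finset.card_filter_le _ _
    _ = v := by rw [Nat.card_Icc]; omega

lemma stdT_apply' (Q : SemistandardYoungTableau μ) {p : ℕ × ℕ} (hp : p ∈ μ.cells) :
    stdT Q p.1 p.2 = rank Q p := by
  rw [stdT_apply Q ((YoungDiagram.mem_cells _).1 hp)]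

/-- Key recovery lemma: destandardizing the standardization of a QY tableau
recovers its entries. -/
lemma desCount_rank {Q : SemistandardYoungTableau μ} (hQ : IsQY μ Q) :
    ∀ d : ℕ, ∀ p ∈ μ.cells, rank Q p = d → desCount (stdT Q) d = Q p.1 p.2 := by
  intro d
  induction d with
  | zero =>
    intro p hp hr
    rw [desCount_zero]
    by_contra hne
    have hpos : 0 < Q p.1 p.2 := Nat.pos_of_ne_zero (fun h => hne h.symm)
    obtain ⟨i, j, hij, hval⟩ :=
      appears_pred hQ hpos ⟨p.1, p.2, (YoungDiagram.mem_cells _).1 hp, rfl⟩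
    have hkey : key Q (i, j) < key Q p := by
      rw [key_lt_iff]
      left
      simp only []
      omega
    have := rank_lt_rank Q ((YoungDiagram.mem_cells _).2 hij) hkey
    omega
  | succ d ih =>
    intro p hp hr
    have hdlt : d < μ.card := by have := rank_lt_card Q hp; omega
    obtain ⟨q, hq, hrq⟩ := rank_surj Q hdlt
    have hkeyqp : key Q q < key Q p := by
      rw [← rank_lt_rank_iff Q hq hp, hrq, hr]; omega
    have hkeyqp' := (key_lt_iff Q q p).1 hkeyqp
    have hQqp : Q q.1 q.2 ≤ Q p.1 p.2 := by omega
    have hupper : Q p.1 p.2 ≤ Q q.1 q.2 + 1 := by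
      by_contra hgt
      push_neg at hgt
      obtain ⟨i, j, hij, hval⟩ := appears_of_le hQ (by omega : Q q.1 q.2 + 1 ≤ Q p.1 p.2)
        ⟨p.1, p.2, (YoungDiagram.mem_cells _).1 hp, rfl⟩
      have h1 : key Q q < key Q (i, j) := by
        rw [key_lt_iff]; left; simp only []; omega
      have h2 : key Q (i, j) < key Q p := by
        rw [key_lt_iff]; left; simp only []; omega
      have r1 := rank_lt_rank Q hq h1
      have r2 := rank_lt_rank Q ((YoungDiagram.mem_cells _).2 hij) h2
      omega
    have hdes : isDes (stdT Q) (d + 1) ↔ Q p.1 p.2 = Q q.1 q.2 + 1 := by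
      constructor
      · rintro ⟨a, ha, b, hb, hTa, hTb, hab⟩
        rw [stdT_apply' Q ha] at hTa
        rw [stdT_apply' Q hb] at hTb
        have hap : a = p := rank_injOn Q ha hp (by omega)
        have hbq : b = q := rank_injOn Q hb hq (by omega)
        subst hap; subst hbq
        omega
      · intro hvals
        obtain ⟨i, j, i', j', hij, hij', hv1, hv2, hjj'⟩ :=
          hQ (Q q.1 q.2 + 1) (Nat.succ_pos _)
            ⟨p.1, p.2, (YoungDiagram.mem_cells _).1 hp, hvals⟩
        have hijc : (i, j) ∈ μ.cells := (YoungDiagram.mem_cells _).2 hij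
        have hijc' : (i', j') ∈ μ.cells := (YoungDiagram.mem_cells _).2 hij'
        have h1 : key Q q < key Q (i, j) := by
          rw [key_lt_iff]; left; simp only []; omega
        have h2 : rank Q p ≤ rank Q (i, j) := by
          have := rank_lt_rank Q hq h1
          omega
        have h3 := (key_le_iff Q p (i, j)).1 ((rank_le_rank_iff Q hp hijc).1 h2)
        have hpj : p.2 ≤ j := by simp only [] at h3; omega
        have h4 : key Q (i', j') < key Q p := by
          rw [key_lt_iff]; left; simp only []; omega
        have h5 : rank Q (i', j') ≤ rank Q q := by
          have := rank_lt_rank Q hijc' h4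
          omega
        have h6 := (key_le_iff Q (i', j') q).1 ((rank_le_rank_iff Q hijc' hq).1 h5)
        have hjq : j' ≤ q.2 := by simp only [] at h6; omega
        refine ⟨p, hp, q, hq, ?_, ?_, by omega⟩
        · rw [stdT_apply' Q hp, hr]
        · rw [stdT_apply' Q hq, hrq]; omega
    rw [desCount_succ, ih q hq hrq]
    by_cases hcase : Q p.1 p.2 = Q q.1 q.2 + 1
    · rw [if_pos (hdes.2 hcase)]
      omega
    · rw [if_neg (fun h => hcase (hdes.1 h))]
      omega

lemma dst_std {Q : SemistandardYoungTableau μ} (hQ : IsQY μ Q) {i j : ℕ} (hij : (i, j) ∈ μ) :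
    desCount (stdT Q) (stdT Q i j) = Q i j := by
  rw [stdT_apply Q hij]
  exact desCount_rank hQ _ (i, j) ((YoungDiagram.mem_cells _).2 hij) rfl

lemma syt_entry_lt {T : SemistandardYoungTableau μ} (hT : IsSYT μ T) {i j : ℕ}
    (hij : (i, j) ∈ μ) : T i j < μ.card := by
  classical
  let G : Fin μ.card → {p : ℕ × ℕ // p ∈ μ.cells} := fun v =>
    ⟨(hT v v.2).choose, (YoungDiagram.mem_cells _).2 (hT v v.2).choose_spec.1.1⟩
  have hval : ∀ v : Fin μ.card, T (G v).1.1 (G v).1.2 = v := fun v => (hT v v.2).choose_spec.1.2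
  have hinj : Function.Injective G := by
    intro a b hab
    have ha := hval a
    rw [hab, hval b] at ha
    exact Fin.ext ha.symm
  have hbij : Function.Bijective G := by
    rw [Fintype.bijective_iff_injective_and_card]
    exact ⟨hinj, by simp⟩
  obtain ⟨v, hv⟩ := hbij.2 ⟨(i, j), (YoungDiagram.mem_cells _).2 hij⟩
  have := hval v
  rw [hv] at this
  simp only [] at this
  rw [this]
  exact v.2

lemma syt_injOn {T : SemistandardYoungTableau μ} (hT : IsSYT μ T) {p q : ℕ × ℕ}
    (hp : p ∈ μ) (hq : q ∈ μ) (h : T p.1 p.2 = T q.1 q.2) : p = q := by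
  have hlt : T p.1 p.2 < μ.card := syt_entry_lt hT (show (p.1, p.2) ∈ μ by simpa using hp)
  obtain ⟨r, _, hun⟩ := hT (T p.1 p.2) hlt
  rw [hun p ⟨hp, rfl⟩, hun q ⟨hq, h.symm⟩]

lemma col_mono_of_desCount_eq {T : SemistandardYoungTableau μ} (hT : IsSYT μ T) :
    ∀ k a : ℕ, a + k < μ.card → desCount T a = desCount T (a + k) →
      ∀ p q : ℕ × ℕ, p ∈ μ → q ∈ μ → T p.1 p.2 = a → T q.1 q.2 = a + k →
        p.2 ≤ q.2 ∧ (0 < k → p.2 < q.2) := by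
  intro k
  induction k with
  | zero =>
    intro a _ _ p q hp hq hvp hvq
    have : p = q := syt_injOn hT hp hq (by omega)
    subst this
    exact ⟨le_rfl, by omega⟩
  | succ k ih =>
    intro a ha hdc p q hp hq hvp hvq
    have hmono1 := desCount_mono T (show a ≤ a + k by omega)
    have hmono2 := desCount_mono T (show a + k ≤ a + k + 1 by omega)
    have hsucc := desCount_succ T (a + k)
    rw [show a + (k + 1) = a + k + 1 by omega] at hdc
    have hnd : ¬ isDes T (a + k + 1) := by
      intro hdes
      rw [if_pos hdes] at hsucc
      omega
    rw [if_neg hnd] at hsucc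
    obtain ⟨r, ⟨hrμ, hrv⟩, _⟩ := hT (a + k) (by omega)
    have hih := ih a (by omega) (by omega) p r hp hrμ hvp hrv
    have hrq : r.2 < q.2 := by
      by_contra hle
      push_neg at hle
      exact hnd ⟨q, (YoungDiagram.mem_cells _).2 hq, r, (YoungDiagram.mem_cells _).2 hrμ,
        by rw [hvq]; omega, by rw [hrv]; omega, hle⟩
    exact ⟨by omega, fun _ => by omega⟩

/-- The destandardization of a standard tableau. -/
noncomputable def dstT (T : SemistandardYoungTableau μ) (hT : IsSYT μ T) :
    SemistandardYoungTableau μ where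
  entry i j := if (i, j) ∈ μ then desCount T (T i j) else 0
  row_weak' := by
    intro i j1 j2 hj hcell
    have h1 : (i, j1) ∈ μ := μ.up_left_mem le_rfl hj.le hcell
    show (if (i, j1) ∈ μ then desCount T (T i j1) else 0)
      ≤ (if (i, j2) ∈ μ then desCount T (T i j2) else 0)
    rw [if_pos h1, if_pos hcell]
    exact desCount_mono T (T.row_weak hj hcell)
  col_strict' := by
    intro i1 i2 j hi hcell
    have h1 : (i1, j) ∈ μ := μ.up_left_mem hi.le le_rfl hcell
    show (if (i1, j) ∈ μ then desCount T (T i1 j) else 0)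
      < (if (i2, j) ∈ μ then desCount T (T i2 j) else 0)
    rw [if_pos h1, if_pos hcell]
    have hlt := T.col_strict hi hcell
    rcases Nat.lt_or_ge (desCount T (T i1 j)) (desCount T (T i2 j)) with h | h
    · exact h
    have heq : desCount T (T i1 j) = desCount T (T i2 j) :=
      le_antisymm (desCount_mono T hlt.le) h
    exfalso
    have hcd : T i2 j < μ.card := syt_entry_lt hT hcell
    have := col_mono_of_desCount_eq hT (T i2 j - T i1 j) (T i1 j)
      (by omega) (by rw [show T i1 j + (T i2 j - T i1 j) = T i2 j by omega]; exact heq)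
      (i1, j) (i2, j) h1 hcell rfl (by simp only []; omega)
    have := this.2 (by omega)
    simp at this
  zeros' := by
    intro i j h
    show (if (i, j) ∈ μ then desCount T (T i j) else 0) = 0
    rw [if_neg h]

lemma dstT_apply {T : SemistandardYoungTableau μ} (hT : IsSYT μ T) {i j : ℕ}
    (hij : (i, j) ∈ μ) : dstT T hT i j = desCount T (T i j) := if_pos hij

lemma dstT_entryLE {T : SemistandardYoungTableau μ} (hT : IsSYT μ T) :
    EntryLE μ (dstT T hT) μ.card := by
  intro i j hij
  rw [dstT_apply hT hij]
  exact lt_of_le_of_lt (desCount_le T (T i j)) (syt_entry_lt hT hij)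

lemma dstT_isQY {T : SemistandardYoungTableau μ} (hT : IsSYT μ T) : IsQY μ (dstT T hT) := by
  intro v hv ⟨i, j, hij, hval⟩
  rw [dstT_apply hT hij] at hval
  have hP : ∃ w, desCount T w = v := ⟨T i j, hval⟩
  classical
  set w := Nat.find hP with hw
  have hPw : desCount T w = v := Nat.find_spec hP
  have hwpos : 0 < w := by
    rcases Nat.eq_zero_or_pos w with h | h
    · rw [h, desCount_zero] at hPw; omega
    · exact h
  have hwmin : ¬ desCount T (w - 1) = v := Nat.find_min hP (by omega)
  have hsucc := desCount_succ T (w - 1)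
  rw [show w - 1 + 1 = w by omega] at hsucc
  have hdes : isDes T w := by
    by_contra h
    rw [if_neg h] at hsucc
    omega
  have hprev : desCount T (w - 1) = v - 1 := by
    rw [if_pos hdes] at hsucc
    omega
  obtain ⟨a, ha, b, hb, hva, hvb, hab⟩ := hdes
  have haμ : (a.1, a.2) ∈ μ := by simpa using (YoungDiagram.mem_cells _).1 ha
  have hbμ : (b.1, b.2) ∈ μ := by simpa using (YoungDiagram.mem_cells _).1 hb
  refine ⟨a.1, a.2, b.1, b.2, haμ, hbμ, ?_, ?_, hab⟩
  · rw [dstT_apply hT haμ, hva, hPw]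
  · rw [dstT_apply hT hbμ, hvb, hprev]

lemma std_dst {T : SemistandardYoungTableau μ} (hT : IsSYT μ T) :
    stdT (dstT T hT) = T := by
  classical
  set D := dstT T hT with hD
  apply SemistandardYoungTableau.ext
  intro i j
  by_cases hij : (i, j) ∈ μ
  · rw [stdT_apply D hij]
    have hkey_iff : ∀ p q : ℕ × ℕ, p ∈ μ.cells → q ∈ μ.cells →
        (key D q < key D p ↔ T q.1 q.2 < T p.1 p.2) := by
      have hdir : ∀ p q : ℕ × ℕ, p ∈ μ.cells → q ∈ μ.cells →
          T q.1 q.2 < T p.1 p.2 → key D q < key D p := by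
        intro p q hp hq hlt
        have hpμ : (p.1, p.2) ∈ μ := by simpa using (YoungDiagram.mem_cells _).1 hp
        have hqμ : (q.1, q.2) ∈ μ := by simpa using (YoungDiagram.mem_cells _).1 hq
        have hDq : D q.1 q.2 = desCount T (T q.1 q.2) := dstT_apply hT hqμ
        have hDp : D p.1 p.2 = desCount T (T p.1 p.2) := dstT_apply hT hpμ
        rw [key_lt_iff, hDq, hDp]
        rcases Nat.lt_or_ge (desCount T (T q.1 q.2)) (desCount T (T p.1 p.2)) with h | h
        · exact Or.inl h
        · have heq : desCount T (T q.1 q.2) = desCount T (T p.1 p.2) :=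
            le_antisymm (desCount_mono T hlt.le) h
          right
          refine ⟨heq, ?_⟩
          have hcd : T p.1 p.2 < μ.card := syt_entry_lt hT hpμ
          have := col_mono_of_desCount_eq hT (T p.1 p.2 - T q.1 q.2) (T q.1 q.2)
            (by omega)
            (by rw [show T q.1 q.2 + (T p.1 p.2 - T q.1 q.2) = T p.1 p.2 by omega]; exact heq)
            q p hqμ hpμ rfl (by omega)
          exact this.2 (by omega)
      intro p q hp hq
      constructor
      · intro h
        rcases lt_trichotomy (T q.1 q.2) (T p.1 p.2) with hlt | heq | hgt
        · exact hlt
        · exfalso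
          have : q = p := syt_injOn hT ((YoungDiagram.mem_cells _).1 hq)
            ((YoungDiagram.mem_cells _).1 hp) heq
          rw [this] at h
          exact lt_irrefl _ h
        · exact absurd (hdir q p hq hp hgt) (not_lt_of_gt h)
      · exact hdir p q hp hq
    have hfilter : μ.cells.filter (fun q => key D q < key D (i, j))
        = μ.cells.filter (fun q => T q.1 q.2 < T i j) := by
      apply Finset.filter_congr
      intro q hq
      simpa using hkey_iff (i, j) q ((YoungDiagram.mem_cells _).2 hij) hq
    rw [rank, hfilter]
    -- count cells with smaller T-value
    set Tval : ℕ × ℕ → ℕ := fun q => T q.1 q.2 with hTval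
    have hinjOn : Set.InjOn Tval μ.cells := by
      intro a ha b hb hab
      exact syt_injOn hT ((YoungDiagram.mem_cells _).1 ha) ((YoungDiagram.mem_cells _).1 hb) hab
    have himg : μ.cells.image Tval = Finset.range μ.card := by
      apply Finset.eq_of_subset_of_card_le
      · intro x hx
        rw [Finset.mem_image] at hx
        obtain ⟨q, hq, hqx⟩ := hx
        rw [Finset.mem_range, ← hqx]
        exact syt_entry_lt hT (by simpa using (YoungDiagram.mem_cells _).1 hq)
      · rw [Finset.card_range, Finset.card_image_of_injOn hinjOn]
    have hstep : (μ.cells.filter (fun q => T q.1 q.2 < T i j)).card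
        = ((μ.cells.filter (fun q => Tval q < T i j)).image Tval).card := by
      rw [Finset.card_image_of_injOn (hinjOn.mono (Finset.filter_subset _ _))]
    have himgf : Finset.image Tval (Finset.filter (fun q => Tval q < T i j) μ.cells)
        = (Finset.image Tval μ.cells).filter (fun x => x < T i j) := (Finset.filter_image (p := fun x => x < T i j) (f := Tval) (s := μ.cells)).symm
    rw [hstep, himgf, himg]
    have : (Finset.range μ.card).filter (fun x => x < T i j) = Finset.range (T i j) := by
      ext x
      have := syt_entry_lt hT hij
      simp only [Finset.mem_filter, Finset.mem_range]
      omega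
    rw [this, Finset.card_range]
  · rw [(stdT D).zeros hij, T.zeros hij]

lemma finite_entryLE (m : ℕ) : Finite {Q : SemistandardYoungTableau μ // EntryLE μ Q m} := by
  classical
  let F : {Q : SemistandardYoungTableau μ // EntryLE μ Q m} →
      ({p : ℕ × ℕ // p ∈ μ.cells} → Fin (m + 1)) :=
    fun Q p => ⟨Q.1 p.1.1 p.1.2, by
      have := Q.2 p.1.1 p.1.2 ((YoungDiagram.mem_cells _).1 p.2)
      omega⟩
  have hinj : Function.Injective F := by
    intro a b hab
    apply Subtype.ext
    apply SemistandardYoungTableau.ext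
    intro i j
    by_cases hij : (i, j) ∈ μ
    · have := congrFun hab ⟨(i, j), (YoungDiagram.mem_cells _).2 hij⟩
      exact congrArg Fin.val this
    · rw [a.1.zeros hij, b.1.zeros hij]
  exact Finite.of_injective F hinj

lemma finite_sub {P : SemistandardYoungTableau μ → Prop} {m : ℕ}
    (h : ∀ Q, P Q → EntryLE μ Q m) : Finite {Q : SemistandardYoungTableau μ // P Q} := by
  have := finite_entryLE (μ := μ) m
  exact Finite.of_injective
    (fun x : {Q // P Q} => (⟨x.1, h x.1 x.2⟩ : {Q : SemistandardYoungTableau μ // EntryLE μ Q m}))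
    (by
      intro a b hab
      simp only [Subtype.mk.injEq] at hab
      exact Subtype.ext hab)

end QYTAux

/-- every quasi-Yamanouchi tableau in `QYT_{≤n}(λ)` is its own
destandardization; the sets `QYT_{=m}(λ)` for `ℓ(λ) ≤ m ≤ n - (λ₁ - 1)` partition
`QYT_{≤n}(λ)`; and consequently `SYT(λ) = Σ_m QYT_{=m}(λ)`. -/
theorem qyt_partition_syt (μ : YoungDiagram) (hμ : 0 < μ.card) :
    (∀ Q : SemistandardYoungTableau μ, IsQY μ Q → EntryLE μ Q μ.card → IsDst μ Q Q) ∧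
    (∀ Q : SemistandardYoungTableau μ, IsQY μ Q → EntryLE μ Q μ.card →
      ∃! m : ℕ, m ∈ Finset.Icc (μ.colLen 0) (μ.card - (μ.rowLen 0 - 1)) ∧
        MaxEq μ Q m) ∧
    SYTcount μ = ∑ m ∈ Finset.Icc (μ.colLen 0) (μ.card - (μ.rowLen 0 - 1)), QYTeq μ m := by
  classical
  refine ⟨?_, ?_, ?_⟩
  · intro Q hQY _
    refine ⟨Relation.ReflTransGen.refl, ?_⟩
    rintro Q' ⟨v, hv0, hex, hsep, -⟩
    obtain ⟨i, j, i', j', hij, hij', hv, hv', hjj⟩ := hQY v hv0 hex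
    have := hsep i j i' j' hij hij' hv hv'
    omega
  · intro Q hQY hE
    exact ⟨QYTAux.mval Q, ⟨QYTAux.mval_mem_Icc hQY hμ, QYTAux.maxEq_mval Q hμ⟩,
      fun m hm => QYTAux.maxEq_unique hμ hm.2⟩
  · haveI hFm : ∀ m : ℕ, Finite {Q : SemistandardYoungTableau μ // IsQY μ Q ∧ MaxEq μ Q m} :=
      fun m => QYTAux.finite_sub (fun Q h => h.2.1)
    haveI hFA : Finite {Q : SemistandardYoungTableau μ // IsQY μ Q ∧ EntryLE μ Q μ.card} :=
      QYTAux.finite_sub (fun Q h => h.2)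
    set I := Finset.Icc (μ.colLen 0) (μ.card - (μ.rowLen 0 - 1)) with hI
    have h1 : SYTcount μ
        = Nat.card {Q : SemistandardYoungTableau μ // IsQY μ Q ∧ EntryLE μ Q μ.card} := by
      rw [SYTcount]
      apply (Nat.card_eq_of_bijective (fun Q : {Q // IsQY μ Q ∧ EntryLE μ Q μ.card} =>
        (⟨QYTAux.stdT Q.1, QYTAux.stdT_isSYT Q.1⟩ : {T // IsSYT μ T})) ?_).symm
      constructor
      · intro a b hab
        have hst : QYTAux.stdT a.1 = QYTAux.stdT b.1 := congrArg Subtype.val hab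
        apply Subtype.ext
        apply SemistandardYoungTableau.ext
        intro i j
        by_cases hij : (i, j) ∈ μ
        · rw [← QYTAux.dst_std a.2.1 hij, ← QYTAux.dst_std b.2.1 hij, hst]
        · rw [a.1.zeros hij, b.1.zeros hij]
      · intro T
        refine ⟨⟨QYTAux.dstT T.1 T.2, QYTAux.dstT_isQY T.2, QYTAux.dstT_entryLE T.2⟩, ?_⟩
        exact Subtype.ext (QYTAux.std_dst T.2)
    have E : {Q : SemistandardYoungTableau μ // IsQY μ Q ∧ EntryLE μ Q μ.card} ≃
        (Σ m : I, {Q : SemistandardYoungTableau μ // IsQY μ Q ∧ MaxEq μ Q (m : ℕ)}) :=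
      { toFun := fun Q => ⟨⟨QYTAux.mval Q.1, QYTAux.mval_mem_Icc Q.2.1 hμ⟩,
          ⟨Q.1, Q.2.1, QYTAux.maxEq_mval Q.1 hμ⟩⟩
        invFun := fun x => ⟨x.2.1, x.2.2.1, fun i j hij => by
          have hlt := x.2.2.2.1 i j hij
          have hm := (Finset.mem_Icc.1 x.1.2).2
          have : (x.1 : ℕ) ≤ μ.card := le_trans hm (Nat.sub_le _ _)
          omega⟩
        left_inv := fun Q => Subtype.ext rfl
        right_inv := fun x => by
          obtain ⟨⟨m, hm⟩, Q, hQ⟩ := x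
          have hmQ : QYTAux.mval Q = m := (QYTAux.maxEq_unique hμ hQ.2).symm
          subst hmQ
          rfl }
    rw [h1, Nat.card_congr E]
    letI : ∀ m : ℕ, Fintype {Q : SemistandardYoungTableau μ // IsQY μ Q ∧ MaxEq μ Q m} :=
      fun m => Fintype.ofFinite _
    rw [Nat.card_eq_fintype_card, Fintype.card_sigma]
    rw [← Finset.sum_coe_sort I (fun m => QYTeq μ m)]
    apply Finset.sum_congr rfl
    intro x _
    rw [QYTeq, Nat.card_eq_fintype_card]
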